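/- Let G be a finite p-group of nilpotence class 2 with |Z(G)| = p such that (G, Z(G)) is a Camina pair and |G| = p^n with n ≥ 3. Then |Aut_c(G)| ≤ p^{n-1} = |G/Z(G)|, so every class-preserving automorphism of G is inner. -/

import Mathlib

open scoped IsMulCommutative commutatorElement

open Module in
lemma aux_card_monoidHom_le (p : ℕ) [Fact p.Prime] (E Z : Type*) [CommGroup E] [CommGroup Z]
    [Finite E] [Finite Z] (hE : ∀ x : E, x ^ p = 1) (hZc : Nat.card Z = p) :
    Nat.card (E →* Z) ≤ Nat.card E := by
  have hp : p.Prime := Fact.out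
  haveI : NeZero p := ⟨hp.ne_zero⟩
  have hZE : ∀ x : Z, x ^ p = 1 := fun x => by rw [← hZc]; exact pow_card_eq_one'
  letI mE : Module (ZMod p) (Additive E) :=
    AddCommGroup.zmodModule (fun x => by simpa using congrArg Additive.ofMul (hE x.toMul))
  letI mZ : Module (ZMod p) (Additive Z) :=
    AddCommGroup.zmodModule (fun x => by simpa using congrArg Additive.ofMul (hZE x.toMul))
  clear_value mE mZ
  haveI : Module.Free (ZMod p) (Additive E) := Module.Free.of_divisionRing _ _
  haveI : Module.Free (ZMod p) (Additive Z) := Module.Free.of_divisionRing _ _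
  haveI : Finite (Additive E →ₗ[ZMod p] Additive Z) :=
    Finite.of_injective (fun (f : Additive E →ₗ[ZMod p] Additive Z) => f.toFun) (fun f g h => LinearMap.ext fun x => congrFun h x)
  have hinj : Function.Injective (fun f : E →* Z =>
      ({ toFun := MonoidHom.toAdditive f
         map_add' := (MonoidHom.toAdditive f).map_add
         map_smul' := fun c x => ZMod.map_smul (MonoidHom.toAdditive f) c x } :
        Additive E →ₗ[ZMod p] Additive Z)) := by
    intro f g h
    ext x
    exact congrArg (fun j : Additive E →ₗ[ZMod p] Additive Z => j.toFun (Additive.ofMul x)) h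
  have h1 : Nat.card (E →* Z) ≤ Nat.card (Additive E →ₗ[ZMod p] Additive Z) :=
    Nat.card_le_card_of_injective _ hinj
  haveI := Fintype.ofFinite (Additive E →ₗ[ZMod p] Additive Z)
  haveI := Fintype.ofFinite (Additive E)
  haveI := Fintype.ofFinite (Additive Z)
  have hq : Fintype.card (ZMod p) = p := ZMod.card p
  have hcardL : Fintype.card (Additive E →ₗ[ZMod p] Additive Z) =
      p ^ (finrank (ZMod p) (Additive E) * finrank (ZMod p) (Additive Z)) := by
    have h0 := card_eq_pow_finrank (K := ZMod p) (V := Additive E →ₗ[ZMod p] Additive Z)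
    rw [h0, Module.finrank_linearMap, hq]
  have hcardE : Fintype.card (Additive E) = p ^ finrank (ZMod p) (Additive E) := by
    rw [card_eq_pow_finrank (K := ZMod p), hq]
  have hcardZ : Fintype.card (Additive Z) = p ^ finrank (ZMod p) (Additive Z) := by
    rw [card_eq_pow_finrank (K := ZMod p), hq]
  have hZ1 : finrank (ZMod p) (Additive Z) = 1 := by
    have h2 : p ^ 1 = p ^ finrank (ZMod p) (Additive Z) := by
      rw [pow_one, ← hcardZ, ← Nat.card_eq_fintype_card, ← hZc]
      exact (Nat.card_congr Additive.ofMul).symm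
    exact (Nat.pow_right_injective hp.two_le h2).symm
  calc Nat.card (E →* Z) ≤ Nat.card (Additive E →ₗ[ZMod p] Additive Z) := h1
    _ = p ^ (finrank (ZMod p) (Additive E) * finrank (ZMod p) (Additive Z)) := by
        rw [Nat.card_eq_fintype_card, hcardL]
    _ = Fintype.card (Additive E) := by rw [hZ1, mul_one, hcardE]
    _ = Nat.card E := by rw [← Nat.card_eq_fintype_card]; exact (Nat.card_congr Additive.ofMul).symm

/-- `(G, Z(G))` is a Camina pair: `Z(G)` is a nontrivial proper (normal) subgroup and
`x * Z(G) ⊆ xᴳ` for every `x ∈ G \ Z(G)`. -/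
def IsCaminaPairCenter (G : Type*) [Group G] : Prop :=
  Subgroup.center G ≠ ⊥ ∧ Subgroup.center G ≠ ⊤ ∧
    ∀ x : G, x ∉ Subgroup.center G → ∀ z ∈ Subgroup.center G, IsConj x (x * z)

/-- Let `G` be a finite `p`-group of nilpotence class 2 with `|Z(G)| = p` such that
`(G, Z(G))` is a Camina pair and `|G| = p ^ n` with `n ≥ 3`.  Then
`|Aut_c(G)| ≤ p ^ (n - 1) = |G ⧸ Z(G)|`, so every class-preserving automorphism is inner. -/
theorem card_classPreserving_le {p : ℕ} [Fact p.Prime] {G : Type*} [Group G]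
    [Finite G] (hp : IsPGroup p G) (hC : IsCaminaPairCenter G)
    (hcl : commutator G ≤ Subgroup.center G) (hna : commutator G ≠ ⊥)
    (hZ : Nat.card (Subgroup.center G) = p) {n : ℕ} (hn : 3 ≤ n)
    (hcard : Nat.card G = p ^ n) :
    Nat.card {α : MulAut G // ∀ x : G, IsConj x (α x)} ≤ p ^ (n - 1) ∧
      p ^ (n - 1) = Nat.card (G ⧸ Subgroup.center G) ∧
      ∀ α : MulAut G, (∀ x : G, IsConj x (α x)) →
        α ∈ (MulAut.conj : G →* MulAut G).range := by
  classical
  have hpp : p.Prime := Fact.out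
  -- commutator = center
  have hcomm : commutator G = Subgroup.center G := by
    apply Subgroup.eq_of_le_of_card_ge hcl
    have hdvd : Nat.card (commutator G) ∣ p := hZ ▸ Subgroup.card_dvd_of_le hcl
    have hne : Nat.card (commutator G) ≠ 1 := fun h => hna (Subgroup.card_eq_one.mp h)
    have := (hpp.eq_one_or_self_of_dvd _ hdvd).resolve_left hne
    rw [hZ, this]
  have hp1 : 1 ≤ n := le_trans (by norm_num) hn
  -- card of central quotient
  have hQcard : Nat.card (G ⧸ Subgroup.center G) = p ^ (n - 1) := by
    have h1 : Nat.card G = Nat.card (G ⧸ Subgroup.center G) * Nat.card (Subgroup.center G) :=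
      Subgroup.card_eq_card_quotient_mul_card_subgroup _
    rw [hcard, hZ] at h1
    have h2 : p ^ (n - 1) * p = Nat.card (G ⧸ Subgroup.center G) * p := by
      rw [← h1, ← pow_succ, Nat.sub_add_cancel hp1]
    exact (Nat.eq_of_mul_eq_mul_right hpp.pos h2).symm
  -- elements x⁻¹ * α x are central
  have hzmem : ∀ (α : MulAut G), (∀ x, IsConj x (α x)) → ∀ x : G,
      x⁻¹ * α x ∈ Subgroup.center G := by
    intro α hα x
    obtain ⟨c, hc⟩ := isConj_iff.mp (hα x)
    have hx : x⁻¹ * α x = ⁅x⁻¹, c⁆ := by rw [← hc]; group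
    rw [hx]
    refine hcl ?_
    rw [commutator_def]
    exact Subgroup.commutator_mem_commutator (Subgroup.mem_top _) (Subgroup.mem_top _)
  -- the homomorphism attached to a class-preserving automorphism
  let zhom : {α : MulAut G // ∀ x : G, IsConj x (α x)} → (G →* Subgroup.center G) := fun α =>
    { toFun := fun x => ⟨x⁻¹ * α.1 x, hzmem α.1 α.2 x⟩
      map_one' := by
        apply Subtype.ext
        simp
      map_mul' := fun x y => by
        apply Subtype.ext
        show (x * y)⁻¹ * α.1 (x * y) = (x⁻¹ * α.1 x) * (y⁻¹ * α.1 y)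
        have hc : y⁻¹ * (x⁻¹ * α.1 x) = (x⁻¹ * α.1 x) * y⁻¹ :=
          Subgroup.mem_center_iff.mp (hzmem α.1 α.2 x) y⁻¹
        rw [map_mul, mul_inv_rev,
          show y⁻¹ * x⁻¹ * (α.1 x * α.1 y) = (y⁻¹ * (x⁻¹ * α.1 x)) * α.1 y by group, hc]
        group }
  have hzinj : Function.Injective zhom := by
    intro α β h
    apply Subtype.ext
    apply MulEquiv.ext
    intro x
    have h1 : x⁻¹ * α.1 x = x⁻¹ * β.1 x :=
      congrArg (fun f : G →* Subgroup.center G => (f x : G)) h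
    exact mul_left_cancel h1
  haveI : Finite (G →* Subgroup.center G) :=
    Finite.of_injective (fun (f : G →* Subgroup.center G) => (f : G → Subgroup.center G))
      DFunLike.coe_injective
  have hS1 : Nat.card {α : MulAut G // ∀ x : G, IsConj x (α x)} ≤
      Nat.card (G →* Subgroup.center G) := Nat.card_le_card_of_injective _ hzinj
  -- homs from G = homs from the abelianization
  have hS2 : Nat.card (G →* Subgroup.center G) =
      Nat.card (Abelianization G →* Subgroup.center G) :=
    Nat.card_congr Abelianization.lift
  haveI : Finite (Abelianization G) := Quotient.finite _
  have hAcard : Nat.card (Abelianization G) = p ^ (n - 1) := by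
    show Nat.card (G ⧸ commutator G) = p ^ (n - 1)
    rw [hcomm]
    exact hQcard
  -- kill p-th powers
  set A := Abelianization G with hA
  set Pp : Subgroup A := (powMonoidHom p : A →* A).range with hPp
  haveI : Finite (A ⧸ Pp) := Quotient.finite _
  have hZpow : ∀ z : Subgroup.center G, z ^ p = 1 := fun z => by
    rw [← hZ]; exact pow_card_eq_one'
  have hker : ∀ φ : A →* Subgroup.center G, Pp ≤ φ.ker := by
    intro φ x hx
    obtain ⟨a, rfl⟩ := hx
    rw [MonoidHom.mem_ker]
    show φ (a ^ p) = 1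
    rw [map_pow]
    exact hZpow _
  haveI : Finite (A ⧸ Pp →* Subgroup.center G) :=
    Finite.of_injective (fun (f : A ⧸ Pp →* Subgroup.center G) => (f : A ⧸ Pp → Subgroup.center G))
      DFunLike.coe_injective
  have hS3 : Nat.card (A →* Subgroup.center G) ≤
      Nat.card (A ⧸ Pp →* Subgroup.center G) := by
    apply Nat.card_le_card_of_injective
      (fun φ => QuotientGroup.lift Pp φ (hker φ))
    intro φ ψ h
    refine MonoidHom.ext fun a => ?_
    have := congrArg (fun f : A ⧸ Pp →* Subgroup.center G => f ((a : A ⧸ Pp))) h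
    simpa using this
  have hE : ∀ x : A ⧸ Pp, x ^ p = 1 := by
    intro x
    obtain ⟨a, rfl⟩ := QuotientGroup.mk_surjective x
    rw [← QuotientGroup.mk_pow]
    exact (QuotientGroup.eq_one_iff _).mpr ⟨a, rfl⟩
  have hS4 : Nat.card (A ⧸ Pp →* Subgroup.center G) ≤ Nat.card (A ⧸ Pp) :=
    aux_card_monoidHom_le p _ _ hE hZ
  have hS5 : Nat.card (A ⧸ Pp) ≤ Nat.card A := by
    apply Nat.le_of_dvd Nat.card_pos
    exact Subgroup.card_quotient_dvd_card _
  have hmain : Nat.card {α : MulAut G // ∀ x : G, IsConj x (α x)} ≤ p ^ (n - 1) := by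
    calc Nat.card {α : MulAut G // ∀ x : G, IsConj x (α x)}
        ≤ Nat.card (G →* Subgroup.center G) := hS1
      _ = Nat.card (A →* Subgroup.center G) := hS2
      _ ≤ Nat.card (A ⧸ Pp →* Subgroup.center G) := hS3
      _ ≤ Nat.card (A ⧸ Pp) := hS4
      _ ≤ Nat.card A := hS5
      _ = p ^ (n - 1) := hAcard
  refine ⟨hmain, hQcard.symm, ?_⟩
  -- every class-preserving automorphism is inner
  have hker2 : (MulAut.conj : G →* MulAut G).ker = Subgroup.center G := by
    ext g
    rw [MonoidHom.mem_ker, Subgroup.mem_center_iff]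
    constructor
    · intro h x
      have h1 : MulAut.conj g x = x := by rw [h]; rfl
      rw [MulAut.conj_apply] at h1
      have := congrArg (fun y => y * g) h1
      simpa [mul_assoc] using this.symm
    · intro h
      ext x
      show g * x * g⁻¹ = x
      rw [← h x, mul_assoc, mul_inv_cancel, mul_one]
  haveI : Finite (MulAut G) :=
    Finite.of_injective (fun (e : MulAut G) => (e : G → G))
      (fun e f h => by ext x; exact congrFun h x)
  have hTcard : Nat.card (MulAut.conj : G →* MulAut G).range = p ^ (n - 1) := by
    rw [← hQcard, ← hker2]
    exact (Nat.card_congr (QuotientGroup.quotientKerEquivRange _).toEquiv).symm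
  set S : Set (MulAut G) := {α | ∀ x : G, IsConj x (α x)} with hSdef
  have hsub : ((MulAut.conj : G →* MulAut G).range : Set (MulAut G)) ⊆ S := by
    rintro α ⟨g, rfl⟩
    intro x
    rw [isConj_iff]
    exact ⟨g, (MulAut.conj_apply g x).symm⟩
  have hSeq : ((MulAut.conj : G →* MulAut G).range : Set (MulAut G)) = S := by
    refine Set.eq_of_subset_of_ncard_le hsub ?_ (Set.toFinite _)
    rw [← Nat.card_coe_set_eq, ← Nat.card_coe_set_eq]
    calc Nat.card S ≤ p ^ (n - 1) := hmain
      _ = Nat.card ((MulAut.conj : G →* MulAut G).range : Set (MulAut G)) := by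
          rw [← hTcard]; rfl
  intro α hα
  have : α ∈ S := hα
  rw [← hSeq] at this
  exact this
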